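/- Let f : ℝ → ℝ be C², let x : ℝ → ℝ be C¹, and let u : ℝ² → ℝ be C² and nowhere vanishing, with f′(x(s)) ≠ 0 for all s ∈ ℝ. Define X(s) = f(x(s)) and U(s,t) = u(s,t)/f′(x(s)). Then for all (s,t) ∈ ℝ²: (i) U(s,t)·X′(s) = u(s,t)·x′(s); (ii) U_t/U = u_t/u; (iii) U_tt/U = u_tt/u; (iv) (U·U_st − U_s·U_t)/U² = (u·u_st − u_s·u_t)/u². That is, the expressions u·x_s, u_t/u, u_tt/u, and (u·u_st − u_s·u_t)/u² are invariant under the prolonged action of the pseudo-group X = f(x), Y = y, U = u/f′(x) written in computational variables (s,t), on parameterized surfaces with x = x(s) independent of t. -/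

import Mathlib

/-- Invariance of u·x_s, u_t/u, u_tt/u and (u·u_st − u_s·u_t)/u² under the
prolonged action of X = f(x), Y = y, U = u/f′(x) in computational variables. -/
theorem stmt_1
    (f x : ℝ → ℝ) (u : ℝ → ℝ → ℝ)
    (hf : ContDiff ℝ 2 f) (hx : ContDiff ℝ 1 x)
    (hu : ContDiff ℝ 2 (Function.uncurry u))
    (hu0 : ∀ s t : ℝ, u s t ≠ 0)
    (hf' : ∀ s : ℝ, deriv f (x s) ≠ 0)
    (X : ℝ → ℝ) (U : ℝ → ℝ → ℝ)
    (hX : ∀ s, X s = f (x s))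
    (hU : ∀ s t, U s t = u s t / deriv f (x s)) :
    ∀ s t : ℝ,
      (U s t * deriv X s = u s t * deriv x s) ∧
      (deriv (fun t' => U s t') t / U s t = deriv (fun t' => u s t') t / u s t) ∧
      (deriv (deriv (fun t' => U s t')) t / U s t
        = deriv (deriv (fun t' => u s t')) t / u s t) ∧
      ((U s t * deriv (fun s' => deriv (fun t' => U s' t') t) s
          - deriv (fun s' => U s' t) s * deriv (fun t' => U s t') t) / (U s t) ^ 2
        = (u s t * deriv (fun s' => deriv (fun t' => u s' t') t) s
          - deriv (fun s' => u s' t) s * deriv (fun t' => u s t') t) / (u s t) ^ 2) := by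
  intro s t
  set c : ℝ → ℝ := fun s' => deriv f (x s') with hc_def
  have hfd : Differentiable ℝ f := hf.differentiable (by norm_num)
  have hxd : Differentiable ℝ x := hx.differentiable one_ne_zero
  have hud : Differentiable ℝ (Function.uncurry u) := hu.differentiable (by norm_num)
  have hc1 : ContDiff ℝ 1 c := by
    have h2 : ContDiff ℝ (1 + 1) f := by norm_num at hf ⊢; exact hf
    exact ((contDiff_succ_iff_deriv.mp h2).2.2).comp hx
  have hcd : Differentiable ℝ c := hc1.differentiable one_ne_zero
  have hcs : c s ≠ 0 := hf' s
  have hus : u s t ≠ 0 := hu0 s t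
  have hfs : deriv f (x s) ≠ 0 := hf' s
  -- derivative in t as an fderiv application
  have hder_t : ∀ s' t'', HasDerivAt (fun t' => u s' t')
      (fderiv ℝ (Function.uncurry u) (s', t'') (0, 1)) t'' := by
    intro s' t''
    have h := (hud (s', t'')).hasFDerivAt
    have h2 : HasDerivAt (fun t' : ℝ => ((s' : ℝ), t')) ((0 : ℝ), (1 : ℝ)) t'' :=
      HasDerivAt.prodMk (hasDerivAt_const t'' s') (hasDerivAt_id t'')
    exact h.comp_hasDerivAt _ h2
  have hg_eq : ∀ s', deriv (fun t' => u s' t') t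
      = fderiv ℝ (Function.uncurry u) (s', t) (0, 1) := fun s' => (hder_t s' t).deriv
  -- differentiability of s' ↦ ∂u/∂t (s', t)
  have hfd1 : ContDiff ℝ 1 (fun p : ℝ × ℝ => fderiv ℝ (Function.uncurry u) p) :=
    hu.fderiv_right (by norm_num)
  have hg : Differentiable ℝ (fun s' => fderiv ℝ (Function.uncurry u) (s', t) (0, 1)) := by
    have : ContDiff ℝ 1 (fun s' : ℝ => fderiv ℝ (Function.uncurry u) (s', t) (0, 1)) :=
      (hfd1.comp (ContDiff.prodMk contDiff_id contDiff_const)).clm_apply contDiff_const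
    exact this.differentiable one_ne_zero
  -- differentiability of slices
  have hust : Differentiable ℝ (fun s' => u s' t) :=
    hud.comp (Differentiable.prodMk differentiable_id (differentiable_const t))
  -- functional equalities
  have hUt_fun : ∀ s', (fun t' => U s' t') = fun t' => u s' t' / c s' :=
    fun s' => funext fun t' => hU s' t'
  have hUt_deriv : ∀ s', deriv (fun t' => U s' t') t = deriv (fun t' => u s' t') t / c s' := by
    intro s'
    rw [hUt_fun s', deriv_div_const]
  refine ⟨?_, ?_, ?_, ?_⟩
  · -- part (i)
    have hXf : X = fun s' => f (x s') := funext hX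
    have hXd : HasDerivAt (fun s' => f (x s')) (deriv f (x s) * deriv x s) s :=
      ((hfd (x s)).hasDerivAt).comp s (hxd s).hasDerivAt
    rw [hXf, hXd.deriv, hU s t]
    field_simp
  · rw [hUt_deriv s, hU s t]
    simp only [hc_def]
    field_simp
  · have h1 : deriv (fun t' => U s t') = fun t'' => deriv (fun t' => u s t') t'' / c s := by
      funext t''
      rw [hUt_fun s, deriv_div_const]
    rw [h1, deriv_div_const, hU s t]
    simp only [hc_def]
    field_simp
  · -- part (iv)
    have hUs_fun : (fun s' => U s' t) = fun s' => u s' t / c s' := funext fun s' => hU s' t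
    have hUs : deriv (fun s' => U s' t) s
        = (deriv (fun s' => u s' t) s * c s - u s t * deriv c s) / c s ^ 2 := by
      rw [hUs_fun]
      exact deriv_div (hust s) (hcd s) hcs
    have hUst_fun : (fun s' => deriv (fun t' => U s' t') t)
        = fun s' => fderiv ℝ (Function.uncurry u) (s', t) (0, 1) / c s' := by
      funext s'
      rw [hUt_deriv s', hg_eq s']
    have hUst : deriv (fun s' => deriv (fun t' => U s' t') t) s
        = (deriv (fun s' => fderiv ℝ (Function.uncurry u) (s', t) (0, 1)) s * c s
            - fderiv ℝ (Function.uncurry u) (s, t) (0, 1) * deriv c s) / c s ^ 2 := by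
      rw [hUst_fun]
      exact deriv_div (hg s) (hcd s) hcs
    have hust_rw : (fun s' => deriv (fun t' => u s' t') t)
        = fun s' => fderiv ℝ (Function.uncurry u) (s', t) (0, 1) := funext hg_eq
    rw [hUst, hUs, hUt_deriv s, hU s t, hust_rw, hg_eq s]
    simp only [hc_def]
    field_simp
    ring
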